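/- Let Ω be a set and let 𝔼 : (Ω → ℝ) → ℝ be a sublinear expectation, i.e. 𝔼 satisfies: (monotonicity) if f(ω) ≤ g(ω) for all ω then 𝔼[f] ≤ 𝔼[g]; (subadditivity) 𝔼[f+g] ≤ 𝔼[f] + 𝔼[g]; (positive homogeneity) 𝔼[λ·f] = λ·𝔼[f] for all λ ≥ 0. Then for every real p ≥ 1 and all f, g : Ω → ℝ, the Minkowski inequality holds: (𝔼[|f+g|^p])^{1/p} ≤ (𝔼[|f|^p])^{1/p} + (𝔼[|g|^p])^{1/p}. In particular ‖f‖ := (𝔼[|f|^p])^{1/p} satisfies the triangle inequality. -/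

import Mathlib

open Real Filter

private lemma conv_aux {a b t p : ℝ} (ha : 0 ≤ a) (hb : 0 ≤ b) (ht : 0 < t)
    (ht1 : t < 1) (hp : 1 ≤ p) :
    (a + b) ^ p ≤ t ^ (1 - p) * a ^ p + (1 - t) ^ (1 - p) * b ^ p := by
  have ht1' : (0:ℝ) < 1 - t := by linarith
  have hx : (0:ℝ) ≤ a / t := div_nonneg ha ht.le
  have hy : (0:ℝ) ≤ b / (1 - t) := div_nonneg hb ht1'.le
  have h := (convexOn_rpow hp).2 (Set.mem_Ici.2 hx) (Set.mem_Ici.2 hy) ht.le ht1'.le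
    (by ring)
  simp only [smul_eq_mul] at h
  have e1 : t * (a / t) + (1 - t) * (b / (1 - t)) = a + b := by
    field_simp
  rw [e1] at h
  refine h.trans_eq ?_
  rw [Real.div_rpow ha ht.le, Real.div_rpow hb ht1'.le,
      Real.rpow_sub ht, Real.rpow_sub ht1', Real.rpow_one, Real.rpow_one]
  ring

/-- Minkowski's inequality for a sublinear expectation: if
`𝔼 : (Ω → ℝ) → ℝ` is monotone, subadditive and positively homogeneous, then for
every `p ≥ 1` and all `f, g : Ω → ℝ`,
`(𝔼[|f+g|^p])^(1/p) ≤ (𝔼[|f|^p])^(1/p) + (𝔼[|g|^p])^(1/p)`. -/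
theorem sublinear_expectation_minkowski
    {Ω : Type*} (E : (Ω → ℝ) → ℝ)
    (hmono : ∀ f g : Ω → ℝ, (∀ ω, f ω ≤ g ω) → E f ≤ E g)
    (hsub : ∀ f g : Ω → ℝ, E (fun ω => f ω + g ω) ≤ E f + E g)
    (hpos : ∀ (l : ℝ) (f : Ω → ℝ), 0 ≤ l → E (fun ω => l * f ω) = l * E f)
    (p : ℝ) (hp : 1 ≤ p) (f g : Ω → ℝ) :
    (E (fun ω => |f ω + g ω| ^ p)) ^ (1 / p) ≤
      (E (fun ω => |f ω| ^ p)) ^ (1 / p) + (E (fun ω => |g ω| ^ p)) ^ (1 / p) := by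
  have hp0 : (0:ℝ) < p := lt_of_lt_of_le one_pos hp
  set a := E (fun ω => |f ω| ^ p) with ha_def
  set b := E (fun ω => |g ω| ^ p) with hb_def
  set c := E (fun ω => |f ω + g ω| ^ p) with hc_def
  have hE0 : E (fun _ => (0:ℝ)) = 0 := by
    have := hpos 0 f le_rfl
    simpa using this
  have ha0 : 0 ≤ a := by
    rw [← hE0]
    exact hmono _ _ (fun ω => Real.rpow_nonneg (abs_nonneg _) p)
  have hb0 : 0 ≤ b := by
    rw [← hE0]
    exact hmono _ _ (fun ω => Real.rpow_nonneg (abs_nonneg _) p)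
  have hc0 : 0 ≤ c := by
    rw [← hE0]
    exact hmono _ _ (fun ω => Real.rpow_nonneg (abs_nonneg _) p)
  set A := a ^ (1/p) with hA_def
  set B := b ^ (1/p) with hB_def
  have hA0 : 0 ≤ A := Real.rpow_nonneg ha0 _
  have hB0 : 0 ≤ B := Real.rpow_nonneg hb0 _
  have hAp : A ^ p = a := by
    rw [hA_def, ← Real.rpow_mul ha0, one_div, inv_mul_cancel₀ hp0.ne', Real.rpow_one]
  have hBp : B ^ p = b := by
    rw [hB_def, ← Real.rpow_mul hb0, one_div, inv_mul_cancel₀ hp0.ne', Real.rpow_one]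
  -- key estimate for every ε > 0
  have key : ∀ ε : ℝ, 0 < ε → c ≤ (A + B + 2*ε) ^ p := by
    intro ε hε
    set S := A + B + 2*ε with hS_def
    have hS : 0 < S := by positivity
    set t := (A + ε) / S with ht_def
    have hAε : (0:ℝ) < A + ε := by positivity
    have hBε : (0:ℝ) < B + ε := by positivity
    have ht : 0 < t := div_pos hAε hS
    have ht1 : t < 1 := by
      rw [ht_def, div_lt_one hS, hS_def]; linarith
    have h1t : 1 - t = (B + ε) / S := by
      rw [ht_def]; field_simp; rw [hS_def]; ring
    have htw : (0:ℝ) ≤ t ^ (1 - p) := Real.rpow_nonneg ht.le _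
    have h1tw : (0:ℝ) ≤ (1-t) ^ (1 - p) := Real.rpow_nonneg (by linarith) _
    -- pointwise bound
    have step1 : c ≤ E (fun ω =>
        t ^ (1-p) * |f ω| ^ p + (1-t) ^ (1-p) * |g ω| ^ p) := by
      refine hmono _ _ fun ω => ?_
      calc |f ω + g ω| ^ p ≤ (|f ω| + |g ω|) ^ p :=
            Real.rpow_le_rpow (abs_nonneg _) (abs_add_le _ _) hp0.le
        _ ≤ _ := conv_aux (abs_nonneg _) (abs_nonneg _) ht ht1 hp
    have step2 : E (fun ω =>
        t ^ (1-p) * |f ω| ^ p + (1-t) ^ (1-p) * |g ω| ^ p)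
        ≤ t ^ (1-p) * a + (1-t) ^ (1-p) * b := by
      calc E (fun ω => t ^ (1-p) * |f ω| ^ p + (1-t) ^ (1-p) * |g ω| ^ p)
          ≤ E (fun ω => t ^ (1-p) * |f ω| ^ p)
            + E (fun ω => (1-t) ^ (1-p) * |g ω| ^ p) := hsub _ _
        _ = t ^ (1-p) * a + (1-t) ^ (1-p) * b := by
            rw [hpos _ _ htw, hpos _ _ h1tw]
    have step3 : t ^ (1-p) * a + (1-t) ^ (1-p) * b
        ≤ t ^ (1-p) * (A+ε) ^ p + (1-t) ^ (1-p) * (B+ε) ^ p := by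
      have h1 : a ≤ (A+ε) ^ p := by
        rw [← hAp]; exact Real.rpow_le_rpow hA0 (by linarith) hp0.le
      have h2 : b ≤ (B+ε) ^ p := by
        rw [← hBp]; exact Real.rpow_le_rpow hB0 (by linarith) hp0.le
      gcongr
    have step4 : t ^ (1-p) * (A+ε) ^ p + (1-t) ^ (1-p) * (B+ε) ^ p = S ^ p := by
      rw [ht_def, h1t, Real.div_rpow hAε.le hS.le, Real.div_rpow hBε.le hS.le]
      have e1 : (A+ε) ^ (1-p) / S ^ (1-p) * (A+ε) ^ p = (A+ε) / S ^ (1-p) := by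
        rw [div_mul_eq_mul_div, ← Real.rpow_add hAε]
        norm_num
      have e2 : (B+ε) ^ (1-p) / S ^ (1-p) * (B+ε) ^ p = (B+ε) / S ^ (1-p) := by
        rw [div_mul_eq_mul_div, ← Real.rpow_add hBε]
        norm_num
      rw [e1, e2, ← add_div]
      have : A + ε + (B + ε) = S := by rw [hS_def]; ring
      rw [this, div_eq_iff (ne_of_gt (Real.rpow_pos_of_pos hS _)), ← Real.rpow_add hS]
      norm_num
    calc c ≤ _ := step1
      _ ≤ _ := step2
      _ ≤ _ := step3
      _ = S ^ p := step4
  -- pass to the limit ε → 0⁺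
  have hcAB : c ≤ (A + B) ^ p := by
    have hcont : Filter.Tendsto (fun ε : ℝ => (A + B + 2*ε) ^ p) (nhdsWithin 0 (Set.Ioi 0))
        (nhds ((A + B) ^ p)) := by
      have h1 : Filter.Tendsto (fun ε : ℝ => A + B + 2*ε) (nhds 0) (nhds (A + B)) := by
        have : Continuous (fun ε : ℝ => A + B + 2*ε) := by continuity
        simpa using this.tendsto 0
      have h2 : ContinuousAt (fun x : ℝ => x ^ p) (A + B) :=
        Real.continuousAt_rpow_const _ _ (Or.inr hp0.le)
      exact (h2.tendsto.comp h1).mono_left nhdsWithin_le_nhds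
    exact ge_of_tendsto hcont (eventually_nhdsWithin_of_forall fun ε hε => key ε hε)
  have hfin : ((A + B) ^ p) ^ (1/p) = A + B := by
    rw [← Real.rpow_mul (by positivity), mul_one_div, div_self hp0.ne', Real.rpow_one]
  calc c ^ (1/p) ≤ ((A + B) ^ p) ^ (1/p) :=
        Real.rpow_le_rpow hc0 hcAB (by positivity)
    _ = A + B := hfin
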